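/- Let Γ : ℝ → ℝ be symmetric, non-negative definite, with Γ(0) = 1, 0 ≤ Γ ≤ 1, and Γ(z) → 0 as |z| → ∞. Then for every δ > 0, sup_{|z| ≥ δ} Γ(z) < 1. -/
import Mathlib

/-- A function `Γ : ℝ → ℝ` is non-negative definite if for every finite collection of
points `z i` and coefficients `c i`, `∑ i, ∑ j, c i * c j * Γ (z i - z j) ≥ 0`. -/
def NonNegDefinite (Γ : ℝ → ℝ) : Prop :=
  ∀ (n : ℕ) (z c : Fin n → ℝ), 0 ≤ ∑ i, ∑ j, c i * c j * Γ (z i - z j)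

lemma key_ineq (Γ : ℝ → ℝ) (hsym : ∀ z : ℝ, Γ (-z) = Γ z)
    (hnd : NonNegDefinite Γ) (h0 : Γ 0 = 1) (x y : ℝ) :
    (Γ x - Γ y) ^ 2 ≤ 2 * (1 - Γ (x - y)) := by
  have h := hnd 3 ![0, x, y] ![-(Γ x - Γ y), 1, -1]
  have hyx : Γ (y - x) = Γ (x - y) := by rw [← neg_sub x y, hsym]
  have hx' : Γ (0 - x) = Γ x := by rw [zero_sub, hsym]
  have hy' : Γ (0 - y) = Γ y := by rw [zero_sub, hsym]
  simp only [Fin.sum_univ_three, Matrix.cons_val_zero, Matrix.cons_val_one,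
    Matrix.head_cons, Matrix.cons_val_two, Matrix.tail_cons, sub_self, sub_zero,
    hx', hy', hyx, h0] at h
  nlinarith [h]

theorem stmt_1 (Γ : ℝ → ℝ) (hsym : ∀ z : ℝ, Γ (-z) = Γ z)
    (hnd : NonNegDefinite Γ) (h0 : Γ 0 = 1)
    (hrange : ∀ z : ℝ, Γ z ∈ Set.Icc (0 : ℝ) 1)
    (hdecay : Filter.Tendsto Γ (Filter.cocompact ℝ) (nhds 0)) :
    ∀ δ : ℝ, 0 < δ → sSup (Γ '' {z : ℝ | δ ≤ |z|}) < 1 := by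
  intro δ hδ
  have hne : (Γ '' {z : ℝ | δ ≤ |z|}).Nonempty :=
    ⟨Γ δ, ⟨δ, by simp [abs_of_pos hδ], rfl⟩⟩
  by_contra hcon
  push_neg at hcon
  -- extract near-1 points with positive argument
  have hS : ∀ ε : ℝ, 0 < ε → ∃ w : ℝ, δ ≤ w ∧ 1 - ε < Γ w := by
    intro ε hε
    obtain ⟨x, hxA, hx⟩ := exists_lt_of_lt_csSup hne
      (lt_of_lt_of_le (by linarith : (1:ℝ) - ε < 1) hcon)
    obtain ⟨z, hz, rfl⟩ := hxA
    refine ⟨|z|, hz, ?_⟩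
    rcases abs_choice z with h' | h'
    · rwa [h']
    · rwa [h', hsym]
  choose w hw1 hw2 using fun n : ℕ => hS ((1/2 : ℝ) ^ (2*n+6)) (by positivity)
  set s : ℕ → ℝ := fun n => ∑ k ∈ Finset.range n, w k with hs
  -- lower bound on Γ ∘ s
  have hΓs : ∀ n, 1 - ∑ k ∈ Finset.range n, (1/2 : ℝ) ^ (k+2) ≤ Γ (s n) := by
    intro n
    induction n with
    | zero => simp [hs, h0]
    | succ n ih =>
      have hsub : s (n+1) - s n = w n := by simp [hs, Finset.sum_range_succ]
      have hk := key_ineq Γ hsym hnd h0 (s (n+1)) (s n)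
      rw [hsub] at hk
      have hwb : 1 - (1/2 : ℝ) ^ (2*n+6) < Γ (w n) := hw2 n
      have he : (Γ (s (n+1)) - Γ (s n)) ^ 2 ≤ ((1/2 : ℝ) ^ (n+2)) ^ 2 := by
        have : ((1/2 : ℝ) ^ (n+2)) ^ 2 = (1/2 : ℝ) ^ (2*n+4) := by
          rw [← pow_mul]; ring_nf
        rw [this]
        have h1 : (2:ℝ) * (1 - Γ (w n)) ≤ 2 * (1/2 : ℝ) ^ (2*n+6) := by linarith
        have h2 : (2:ℝ) * (1/2 : ℝ) ^ (2*n+6) ≤ (1/2 : ℝ) ^ (2*n+4) := by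
          rw [show 2*n+6 = (2*n+4)+2 by ring, pow_add]
          have : (0:ℝ) ≤ (1/2 : ℝ) ^ (2*n+4) := by positivity
          nlinarith
        linarith
      have hd : -((1/2 : ℝ) ^ (n+2)) ≤ Γ (s (n+1)) - Γ (s n) := by
        have hp : (0:ℝ) < (1/2 : ℝ) ^ (n+2) := by positivity
        nlinarith [sq_nonneg (Γ (s (n+1)) - Γ (s n) + (1/2 : ℝ) ^ (n+2))]
      rw [Finset.sum_range_succ]
      linarith
  have hhalf : ∀ n, (1/2 : ℝ) ≤ Γ (s n) := by
    intro n
    have hsum : ∑ k ∈ Finset.range n, (1/2 : ℝ) ^ (k+2) ≤ 1/2 := by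
      have : ∑ k ∈ Finset.range n, (1/2 : ℝ) ^ (k+2)
          = (1/4) * ∑ k ∈ Finset.range n, (1/2 : ℝ) ^ k := by
        rw [Finset.mul_sum]
        exact Finset.sum_congr rfl fun k _ => by ring
      rw [this, geom_sum_eq (by norm_num : (1/2:ℝ) ≠ 1)]
      have h2 : (((1/2:ℝ)^n - 1)/(1/2 - 1)) = 2*(1 - (1/2:ℝ)^n) := by ring
      have h3 : (0:ℝ) ≤ (1/2 : ℝ) ^ n := by positivity
      rw [h2]; linarith
    linarith [hΓs n]
  -- s n → ∞
  have hsb : ∀ n : ℕ, (n : ℝ) * δ ≤ s n := by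
    intro n
    calc (n : ℝ) * δ = ∑ _k ∈ Finset.range n, δ := by
          simp [mul_comm]
      _ ≤ s n := Finset.sum_le_sum fun k _ => hw1 k
  have hstop : Filter.Tendsto s Filter.atTop Filter.atTop := by
    apply Filter.tendsto_atTop_mono hsb
    exact Filter.Tendsto.atTop_mul_const hδ tendsto_natCast_atTop_atTop
  have hco : Filter.Tendsto s Filter.atTop (Filter.cocompact ℝ) :=
    hstop.mono_right (by rw [cocompact_eq_atBot_atTop]; exact le_sup_right)
  have hzero : Filter.Tendsto (fun n => Γ (s n)) Filter.atTop (nhds 0) :=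
    hdecay.comp hco
  have : ∀ᶠ n in Filter.atTop, Γ (s n) < 1/2 :=
    hzero.eventually_lt_const (by norm_num)
  obtain ⟨n, hn⟩ := this.exists
  linarith [hhalf n]
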